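/- Let Ω ⊂ ℝ² be the interior of the trapezoid with vertices (2,0), (3,1), (−2,1) and (−1,0). Let f be the geodesic line of (Ω, h_Ω) whose image is Ω ∩ {x = 1}, with f(0) = (1, 1/2) and lim_{t→+∞} f(t) = (1, 0), and let g be the geodesic line whose image is Ω ∩ {x = 0}, with g(0) = (0, 1/2) and lim_{t→+∞} g(t) = (0, 0). Then the distance function t ↦ h_Ω(f(t), g(t)) is not eventually convex: for every T ∈ ℝ, this function is not convex on [T, +∞). -/

import Mathlib

open Real Filter Set Metric

/- The Hilbert distance on a (bounded open convex) domain `Ω` in Euclidean space: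
for `p ≠ q` it is `log ((‖p' - q‖ * ‖q' - p‖) / (‖p' - p‖ * ‖q' - q‖))` where `p', q'`
are the two boundary points of the chord through `p` and `q`, labelled so that `p` lies
strictly between `p'` and `q`, and `q` lies strictly between `p` and `q'`. -/

open Classical in
noncomputable def hilbertDist {n : ℕ} (Ω : Set (EuclideanSpace ℝ (Fin n)))
    (p q : EuclideanSpace ℝ (Fin n)) : ℝ :=
  if _h : p = q then 0
  else Classical.epsilon fun d : ℝ =>
    ∃ p' q' : EuclideanSpace ℝ (Fin n), p' ∈ frontier Ω ∧ q' ∈ frontier Ω ∧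
      p ∈ openSegment ℝ p' q ∧ q ∈ openSegment ℝ p q' ∧
      d = Real.log ((‖p' - q‖ * ‖q' - p‖) / (‖p' - p‖ * ‖q' - q‖))

/-- A geodesic line of `(Ω, hilbertDist Ω)`: a map `f : ℝ → Ω` whose image lies on a
Euclidean line and which satisfies `hilbertDist Ω (f s) (f t) = |s - t|`. -/
def IsGeodesicLine {n : ℕ} (Ω : Set (EuclideanSpace ℝ (Fin n)))
    (f : ℝ → EuclideanSpace ℝ (Fin n)) : Prop :=
  (∀ t, f t ∈ Ω) ∧ Collinear ℝ (Set.range f) ∧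
    ∀ s t : ℝ, hilbertDist Ω (f s) (f t) = |s - t|

/-- The point `(a, b)` of the Euclidean plane. -/
noncomputable def pt (a b : ℝ) : EuclideanSpace ℝ (Fin 2) :=
  (EuclideanSpace.equiv (Fin 2) ℝ).symm ![a, b]

@[simp] lemma pt_apply0 (a b : ℝ) : pt a b 0 = a := rfl
@[simp] lemma pt_apply1 (a b : ℝ) : pt a b 1 = b := rfl

lemma pt_eta (z : EuclideanSpace ℝ (Fin 2)) : z = pt (z 0) (z 1) := by
  ext i; fin_cases i <;> rfl

@[simp] lemma pt_add (a b c d : ℝ) : pt a b + pt c d = pt (a+c) (b+d) := by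
  ext i; fin_cases i <;> rfl

@[simp] lemma pt_smul (r a b : ℝ) : r • pt a b = pt (r*a) (r*b) := by
  ext i; fin_cases i <;> rfl

@[simp] lemma pt_sub (a b c d : ℝ) : pt a b - pt c d = pt (a-c) (b-d) := by
  ext i; fin_cases i <;> simp [pt]

lemma pt_congr {a b c d : ℝ} (h1 : a = c) (h2 : b = d) : pt a b = pt c d := by
  rw [h1, h2]

lemma pt_inj {a b c d : ℝ} (h : pt a b = pt c d) : a = c ∧ b = d :=
  ⟨by simpa using congrArg (fun z => z 0) h, by simpa using congrArg (fun z => z 1) h⟩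

lemma norm_pt (a b : ℝ) : ‖pt a b‖ = Real.sqrt (a^2 + b^2) := by
  rw [EuclideanSpace.norm_eq]
  simp [Fin.sum_univ_two, sq_abs]

@[simp] lemma norm_pt0 (a : ℝ) : ‖pt a 0‖ = |a| := by
  rw [norm_pt]; simp [Real.sqrt_sq_eq_abs]
@[simp] lemma norm_pt0' (b : ℝ) : ‖pt 0 b‖ = |b| := by
  rw [norm_pt]; simp [Real.sqrt_sq_eq_abs]

def Strap : Set (EuclideanSpace ℝ (Fin 2)) :=
  {z | 0 < z 1 ∧ z 1 < 1 ∧ z 0 < 2 + z 1 ∧ -1 - z 1 < z 0}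

def Ktrap : Set (EuclideanSpace ℝ (Fin 2)) :=
  {z | 0 ≤ z 1 ∧ z 1 ≤ 1 ∧ z 0 ≤ 2 + z 1 ∧ -1 - z 1 ≤ z 0}

lemma mem_Strap {a b : ℝ} (h1 : 0 < b) (h2 : b < 1) (h3 : a < 2 + b) (h4 : -1 - b < a) :
    pt a b ∈ Strap := ⟨h1, h2, h3, h4⟩

lemma convex_Ktrap : Convex ℝ Ktrap := by
  rintro x ⟨hx1, hx2, hx3, hx4⟩ y ⟨hy1, hy2, hy3, hy4⟩ a b ha hb hab
  have e0 : (a • x + b • y) 0 = a * x 0 + b * y 0 := rfl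
  have e1 : (a • x + b • y) 1 = a * x 1 + b * y 1 := rfl
  refine ⟨?_, ?_, ?_, ?_⟩ <;> simp only [e0, e1] <;> nlinarith

lemma convex_Strap : Convex ℝ Strap := by
  rintro x ⟨hx1, hx2, hx3, hx4⟩ y ⟨hy1, hy2, hy3, hy4⟩ a b ha hb hab
  have e0 : (a • x + b • y) 0 = a * x 0 + b * y 0 := rfl
  have e1 : (a • x + b • y) 1 = a * x 1 + b * y 1 := rfl
  rcases eq_or_lt_of_le ha with rfl' | ha'
  · have : b = 1 := by linarith
    refine ⟨?_, ?_, ?_, ?_⟩ <;> simp only [e0, e1] <;> nlinarith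
  · refine ⟨?_, ?_, ?_, ?_⟩ <;> simp only [e0, e1] <;> nlinarith

lemma isOpen_Strap : IsOpen Strap := by
  have h0 : Continuous fun z : EuclideanSpace ℝ (Fin 2) => z 0 := by fun_prop
  have h1 : Continuous fun z : EuclideanSpace ℝ (Fin 2) => z 1 := by fun_prop
  have : Strap = {z : EuclideanSpace ℝ (Fin 2) | 0 < z 1} ∩ {z | z 1 < 1}
      ∩ {z | z 0 < 2 + z 1} ∩ {z | -1 - z 1 < z 0} := by
    ext z; simp [Strap]; tauto
  rw [this]
  exact (((isOpen_lt continuous_const h1).inter (isOpen_lt h1 continuous_const)).inter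
    (isOpen_lt h0 (by continuity))).inter (isOpen_lt (by continuity) h0)

lemma Strap_subset_K : Strap ⊆ Ktrap := by
  rintro z ⟨h1, h2, h3, h4⟩; exact ⟨h1.le, h2.le, h3.le, h4.le⟩

lemma hull_eq : convexHull ℝ
    ({pt 2 0, pt 3 1, pt (-2) 1, pt (-1) 0} : Set (EuclideanSpace ℝ (Fin 2))) = Ktrap := by
  apply le_antisymm
  · apply convexHull_min _ convex_Ktrap
    rintro z hz
    simp only [Set.mem_insert_iff, Set.mem_singleton_iff] at hz
    rcases hz with rfl | rfl | rfl | rfl <;> constructor <;> norm_num [Ktrap]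
  · rintro z ⟨h1, h2, h3, h4⟩
    set y := z 1 with hy
    set x := z 0 with hx
    have hz : z = pt x y := pt_eta z
    have hden : (0:ℝ) < 3 + 2 * y := by linarith
    set θ : ℝ := (x + 1 + y) / (3 + 2 * y) with hθ
    have hθ0 : 0 ≤ θ := div_nonneg (by linarith) hden.le
    have hθ1 : θ ≤ 1 := by
      rw [div_le_one hden]; linarith
    set V : Set (EuclideanSpace ℝ (Fin 2)) :=
      ({pt 2 0, pt 3 1, pt (-2) 1, pt (-1) 0} : Set (EuclideanSpace ℝ (Fin 2)))
    have hL : pt (-1-y) y ∈ convexHull ℝ V := by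
      have h4 : pt (-1) 0 ∈ convexHull ℝ V := subset_convexHull ℝ V (by simp [V])
      have h3 : pt (-2) 1 ∈ convexHull ℝ V := subset_convexHull ℝ V (by simp [V])
      have := (convex_convexHull ℝ V).segment_subset h4 h3
      apply this
      exact ⟨1 - y, y, by linarith, h1, by ring, by
        simp only [pt_smul, pt_add]; exact pt_congr (by ring) (by ring)⟩
    have hR : pt (2+y) y ∈ convexHull ℝ V := by
      have h4 : pt 2 0 ∈ convexHull ℝ V := subset_convexHull ℝ V (by simp [V])
      have h3 : pt 3 1 ∈ convexHull ℝ V := subset_convexHull ℝ V (by simp [V])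
      have := (convex_convexHull ℝ V).segment_subset h4 h3
      apply this
      exact ⟨1 - y, y, by linarith, h1, by ring, by
        simp only [pt_smul, pt_add]; exact pt_congr (by ring) (by ring)⟩
    have := (convex_convexHull ℝ V).segment_subset hL hR
    rw [hz]
    apply this
    refine ⟨1 - θ, θ, by linarith, hθ0, by ring, ?_⟩
    simp only [pt_smul, pt_add]
    refine pt_congr ?_ ?_
    · rw [hθ]
      field_simp
      ring
    · ring

lemma interior_Ktrap : interior Ktrap = Strap := by
  apply le_antisymm
  · intro z hz
    rw [mem_interior_iff_mem_nhds, Metric.mem_nhds_iff] at hz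
    obtain ⟨ε, hε, hball⟩ := hz
    set δ := ε / 2 with hδ
    have hδ0 : 0 < δ := by positivity
    have key : ∀ a b : ℝ, |a| ≤ 1 → |b| ≤ 1 → z + δ • pt a b ∈ Ktrap := by
      intro a b ha hb
      apply hball
      rw [Metric.mem_ball, dist_eq_norm, add_sub_cancel_left, norm_smul, norm_pt]
      have : Real.sqrt (a^2+b^2) ≤ Real.sqrt 2 := by
        apply Real.sqrt_le_sqrt
        nlinarith [abs_nonneg a, abs_nonneg b, sq_abs a, sq_abs b]
      have h2 : Real.sqrt 2 < 2 := by
        nlinarith [Real.sq_sqrt (by norm_num : (2:ℝ) ≥ 0), Real.sqrt_nonneg 2]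
      rw [Real.norm_eq_abs, abs_of_pos hδ0]
      have : δ * Real.sqrt (a^2+b^2) ≤ δ * Real.sqrt 2 := by
        nlinarith [Real.sqrt_nonneg (a^2+b^2)]
      nlinarith
    have e0 : ∀ a b : ℝ, (z + δ • pt a b) 0 = z 0 + δ * a := fun a b => rfl
    have e1 : ∀ a b : ℝ, (z + δ • pt a b) 1 = z 1 + δ * b := fun a b => rfl
    obtain ⟨c1, -, -, -⟩ := key 0 (-1) (by norm_num) (by norm_num)
    obtain ⟨-, c2, -, -⟩ := key 0 1 (by norm_num) (by norm_num)
    obtain ⟨-, -, c3, -⟩ := key 1 0 (by norm_num) (by norm_num)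
    obtain ⟨-, -, -, c4⟩ := key (-1) 0 (by norm_num) (by norm_num)
    rw [e1] at c1 c2
    rw [e0, e1] at c3 c4
    refine ⟨by linarith, by linarith, by linarith, by linarith⟩
  · exact interior_maximal Strap_subset_K isOpen_Strap

section frontier_machinery

variable {E : Type*} [NormedAddCommGroup E] [NormedSpace ℝ E]

lemma frontier_unique {Ω : Set E} (hconv : Convex ℝ Ω) (hopen : IsOpen Ω)
    {q a b p : E} (hq : q ∈ Ω) (ha : a ∈ frontier Ω) (hb : b ∈ frontier Ω)
    (h1 : p ∈ openSegment ℝ a q) (h2 : p ∈ openSegment ℝ b q) : a = b := by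
  obtain ⟨u, v, hu, hv, huv, hP1⟩ := h1
  obtain ⟨s, t, hs, ht, hst, hP2⟩ := h2
  have key : ∀ a b : E, a ∈ frontier Ω → b ∈ frontier Ω → ∀ u s : ℝ, 0 < u → 0 < s →
      u • a + (1 - u) • q = p → s • b + (1 - s) • q = p → u < s → False := by
    intro a b ha hb u s hu hs hua hsb hlt
    have hs' : s ≠ 0 := ne_of_gt hs
    have h6 : b = (u/s) • a + ((s-u)/s) • q := by
      have h5 : s • b = u • a + (s - u) • q := by
        have h7 : u • a + (1 - u) • q = s • b + (1 - s) • q := hua.trans hsb.symm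
        linear_combination (norm := module) -h7
      calc b = s⁻¹ • (s • b) := by rw [smul_smul, inv_mul_cancel₀ hs', one_smul]
        _ = s⁻¹ • (u • a + (s - u) • q) := by rw [h5]
        _ = (u/s) • a + ((s-u)/s) • q := by
            rw [smul_add, smul_smul, smul_smul, div_eq_inv_mul, div_eq_inv_mul]
    have hbseg : b ∈ openSegment ℝ a q :=
      ⟨u/s, (s-u)/s, div_pos hu hs, div_pos (by linarith) hs, by field_simp; ring, h6.symm⟩
    have : b ∈ interior Ω := by
      apply hconv.openSegment_closure_interior_subset_interior
        (frontier_subset_closure ha) (by rwa [hopen.interior_eq]) hbseg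
    rw [hopen.frontier_eq] at hb
    rw [hopen.interior_eq] at this
    exact hb.2 this
  have hv' : v = 1 - u := by linarith
  have ht' : t = 1 - s := by linarith
  rw [hv'] at hP1; rw [ht'] at hP2
  rcases lt_trichotomy u s with h | h | h
  · exact absurd (key a b ha hb u s hu hs hP1 hP2 h) (by simp)
  · subst h
    have : u • a = u • b := by
      have := hP1.trans hP2.symm
      linear_combination (norm := module) this
    exact smul_right_injective E (ne_of_gt hu) this
  · exact absurd (key b a hb ha s u hs hu hP2 hP1 h) (by simp)

end frontier_machinery

lemma hilbertDist_eq {n : ℕ} {Ω : Set (EuclideanSpace ℝ (Fin n))}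
    (hconv : Convex ℝ Ω) (hopen : IsOpen Ω)
    {p q p' q' : EuclideanSpace ℝ (Fin n)}
    (hp : p ∈ Ω) (hq : q ∈ Ω) (hpq : p ≠ q)
    (hp' : p' ∈ frontier Ω) (hq' : q' ∈ frontier Ω)
    (h1 : p ∈ openSegment ℝ p' q) (h2 : q ∈ openSegment ℝ p q') :
    hilbertDist Ω p q = Real.log ((‖p' - q‖ * ‖q' - p‖) / (‖p' - p‖ * ‖q' - q‖)) := by
  rw [hilbertDist, dif_neg hpq]
  have hex : ∃ d : ℝ, ∃ a b : EuclideanSpace ℝ (Fin n), a ∈ frontier Ω ∧ b ∈ frontier Ω ∧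
      p ∈ openSegment ℝ a q ∧ q ∈ openSegment ℝ p b ∧
      d = Real.log ((‖a - q‖ * ‖b - p‖) / (‖a - p‖ * ‖b - q‖)) :=
    ⟨_, p', q', hp', hq', h1, h2, rfl⟩
  obtain ⟨a, b, ha, hb, h1', h2', hd⟩ := Classical.epsilon_spec hex
  have hap : a = p' := frontier_unique hconv hopen hq ha hp' h1' h1
  have hbq : b = q' := by
    rw [openSegment_symm] at h2 h2'
    exact frontier_unique hconv hopen hp hb hq' h2' h2
  rw [hd, hap, hbq]

lemma mem_closure_Strap_of_seg {z : EuclideanSpace ℝ (Fin 2)}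
    (h : openSegment ℝ (pt (1/2) (1/2)) z ⊆ Strap) : z ∈ closure Strap := by
  have h2 := closure_mono h
  rw [closure_openSegment] at h2
  exact h2 (right_mem_segment ℝ _ _)

lemma mem_frontier_Strap {z : EuclideanSpace ℝ (Fin 2)}
    (hcl : z ∈ closure Strap) (hz : z ∉ Strap) : z ∈ frontier Strap := by
  rw [isOpen_Strap.frontier_eq]; exact ⟨hcl, hz⟩

lemma frontier_seg_helper {A B : ℝ}
    (h : ∀ α β : ℝ, 0 < α → 0 < β → α + β = 1 →
      pt (α * (1/2) + β * A) (α * (1/2) + β * B) ∈ Strap)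
    (hz : pt A B ∉ Strap) : pt A B ∈ frontier Strap := by
  apply mem_frontier_Strap _ hz
  apply mem_closure_Strap_of_seg
  rintro w ⟨α, β, hα, hβ, hαβ, rfl⟩
  simp only [pt_smul, pt_add]
  exact h α β hα hβ hαβ

lemma frontier_top {c : ℝ} (h0 : 0 ≤ c) (h1 : c ≤ 1) : pt c 1 ∈ frontier Strap := by
  apply frontier_seg_helper
  · intro α β hα hβ hαβ
    exact mem_Strap (by nlinarith) (by nlinarith) (by nlinarith) (by nlinarith)
  · rintro ⟨-, h, -, -⟩; simp at h

lemma frontier_bot {c : ℝ} (h0 : 0 ≤ c) (h1 : c ≤ 1) : pt c 0 ∈ frontier Strap := by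
  apply frontier_seg_helper
  · intro α β hα hβ hαβ
    exact mem_Strap (by nlinarith) (by nlinarith) (by nlinarith) (by nlinarith)
  · rintro ⟨h, -, -, -⟩; simp at h

lemma frontier_right {y : ℝ} (h0 : 0 < y) (h1 : y < 1) : pt (2+y) y ∈ frontier Strap := by
  apply frontier_seg_helper
  · intro α β hα hβ hαβ
    exact mem_Strap (by nlinarith) (by nlinarith) (by nlinarith) (by nlinarith)
  · rintro ⟨-, -, h, -⟩; simp at h

lemma frontier_left {y : ℝ} (h0 : 0 < y) (h1 : y < 1) : pt (-1-y) y ∈ frontier Strap := by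
  apply frontier_seg_helper
  · intro α β hα hβ hαβ
    exact mem_Strap (by nlinarith) (by nlinarith) (by nlinarith) (by nlinarith)
  · rintro ⟨-, -, -, h⟩; simp at h

lemma hilbert_vertical {c a b : ℝ} (hc0 : 0 ≤ c) (hc1 : c ≤ 1)
    (ha0 : 0 < a) (ha1 : a < 1) (hb0 : 0 < b) (hba : b < a) :
    hilbertDist Strap (pt c a) (pt c b) = Real.log ((1-b)*a/((1-a)*b)) := by
  have hb1 : b < 1 := lt_trans hba ha1
  have hpq : pt c a ≠ pt c b := fun h => absurd (pt_inj h).2 (by intro hh; linarith)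
  have h1b : (0:ℝ) < 1 - b := by linarith
  have seg1 : pt c a ∈ openSegment ℝ (pt c 1) (pt c b) := by
    refine ⟨(a-b)/(1-b), (1-a)/(1-b), div_pos (by linarith) h1b, div_pos (by linarith) h1b,
      by field_simp; ring, ?_⟩
    simp only [pt_smul, pt_add]
    refine pt_congr (by field_simp; ring) (by field_simp; ring)
  have seg2 : pt c b ∈ openSegment ℝ (pt c a) (pt c 0) := by
    refine ⟨b/a, (a-b)/a, div_pos hb0 ha0, div_pos (by linarith) ha0,
      by field_simp; ring, ?_⟩
    simp only [pt_smul, pt_add]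
    refine pt_congr (by field_simp; ring) (by field_simp; ring)
  rw [hilbertDist_eq convex_Strap isOpen_Strap
    (mem_Strap ha0 ha1 (by linarith) (by linarith))
    (mem_Strap hb0 hb1 (by linarith) (by linarith)) hpq
    (frontier_top hc0 hc1) (frontier_bot hc0 hc1) seg1 seg2]
  simp only [pt_sub, sub_self, norm_pt0']
  rw [abs_of_pos (by linarith : (0:ℝ) < 1 - b), abs_of_neg (by linarith : (0:ℝ) - a < 0),
    abs_of_pos (by linarith : (0:ℝ) < 1 - a), abs_of_neg (by linarith : (0:ℝ) - b < 0)]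
  congr 1
  ring

lemma hilbert_horizontal {y : ℝ} (h0 : 0 < y) (h1 : y < 1) :
    hilbertDist Strap (pt 1 y) (pt 0 y) =
      Real.log (((2+y)*(2+y))/((1+y)*(1+y))) := by
  have h2y : (0:ℝ) < 2 + y := by linarith
  have hpq : pt 1 y ≠ pt 0 y := fun h => absurd (pt_inj h).1 (by norm_num)
  have seg1 : pt 1 y ∈ openSegment ℝ (pt (2+y) y) (pt 0 y) := by
    refine ⟨1/(2+y), (1+y)/(2+y), by positivity, div_pos (by linarith) h2y,
      by field_simp; ring, ?_⟩
    simp only [pt_smul, pt_add]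
    refine pt_congr (by field_simp; ring) (by field_simp; ring)
  have seg2 : pt 0 y ∈ openSegment ℝ (pt 1 y) (pt (-1-y) y) := by
    refine ⟨(1+y)/(2+y), 1/(2+y), div_pos (by linarith) h2y, by positivity,
      by field_simp; ring, ?_⟩
    simp only [pt_smul, pt_add]
    refine pt_congr (by field_simp; ring) (by field_simp; ring)
  rw [hilbertDist_eq convex_Strap isOpen_Strap
    (mem_Strap h0 h1 (by linarith) (by linarith))
    (mem_Strap h0 h1 (by linarith) (by linarith)) hpq
    (frontier_right h0 h1) (frontier_left h0 h1) seg1 seg2]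
  simp only [pt_sub, sub_self, norm_pt0]
  rw [abs_of_pos (by linarith : (0:ℝ) < 2 + y - 0),
    abs_of_neg (by linarith : -1 - y - 1 < (0:ℝ)),
    abs_of_pos (by linarith : (0:ℝ) < 2 + y - 1),
    abs_of_neg (by linarith : -1 - y - 0 < (0:ℝ))]
  congr 1
  ring


lemma geodesic_formula {c : ℝ} (hc0 : 0 ≤ c) (hc1 : c ≤ 1)
    (u : ℝ → EuclideanSpace ℝ (Fin 2))
    (hu : ∀ t, u t ∈ Strap ∧ (u t) 0 = c) (hu0 : u 0 = pt c (1/2))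
    (hud : ∀ s t : ℝ, hilbertDist Strap (u s) (u t) = |s - t|)
    {t : ℝ} (ht : 0 < t) (hsmall : (u t) 1 < 1/2) :
    u t = pt c (1/(1+Real.exp t)) := by
  obtain ⟨⟨hy0, hy1, -, -⟩, hx⟩ := hu t
  set b := (u t) 1 with hb
  have hut : u t = pt c b := by rw [← hx, hb]; exact pt_eta _
  have hdist := hud 0 t
  rw [hu0, hut, hilbert_vertical hc0 hc1 (by norm_num) (by norm_num) hy0 hsmall] at hdist
  have habs : |0 - t| = t := by rw [abs_sub_comm, sub_zero, abs_of_pos ht]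
  rw [habs] at hdist
  have hb0 : b ≠ 0 := ne_of_gt hy0
  have harg : (1-b)*(1/2)/((1-1/2)*b) = (1-b)/b := by
    rw [div_eq_div_iff (ne_of_gt (by nlinarith : (0:ℝ) < (1-1/2)*b)) hb0]; ring
  rw [harg] at hdist
  have hpos : 0 < (1-b)/b := div_pos (by linarith) hy0
  have hexp : (1-b)/b = Real.exp t := by rw [← hdist, Real.exp_log hpos]
  have hbeq : b = 1/(1+Real.exp t) := by
    have h1 : 1 - b = Real.exp t * b := (div_eq_iff hb0).mp hexp
    have h2 : (0:ℝ) < 1 + Real.exp t := by positivity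
    field_simp
    linarith
  rw [hut, hbeq]

theorem trapezoid_disjoint_geodesics_not_eventually_convex
    (Ω : Set (EuclideanSpace ℝ (Fin 2)))
    (hΩ : Ω = interior (convexHull ℝ
      ({pt 2 0, pt 3 1, pt (-2) 1, pt (-1) 0} : Set (EuclideanSpace ℝ (Fin 2)))))
    (f g : ℝ → EuclideanSpace ℝ (Fin 2))
    (hf : IsGeodesicLine Ω f) (hg : IsGeodesicLine Ω g)
    (hfim : Set.range f = Ω ∩ {z : EuclideanSpace ℝ (Fin 2) | z 0 = 1})
    (hf0 : f 0 = pt 1 (1 / 2))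
    (hflim : Filter.Tendsto f Filter.atTop (nhds (pt 1 0)))
    (hgim : Set.range g = Ω ∩ {z : EuclideanSpace ℝ (Fin 2) | z 0 = 0})
    (hg0 : g 0 = pt 0 (1 / 2))
    (hglim : Filter.Tendsto g Filter.atTop (nhds (pt 0 0))) :
    ∀ T : ℝ, ¬ ConvexOn ℝ (Set.Ici T) (fun t => hilbertDist Ω (f t) (g t)) := by
  have hΩS : Ω = Strap := by rw [hΩ, hull_eq, interior_Ktrap]
  subst hΩS
  intro T hcon
  obtain ⟨hfmem, -, hfdist⟩ := hf
  obtain ⟨hgmem, -, hgdist⟩ := hg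
  have hfc : ∀ t, f t ∈ Strap ∧ (f t) 0 = 1 := by
    intro t
    have h : f t ∈ Set.range f := Set.mem_range_self t
    rw [hfim] at h; exact h
  have hgc : ∀ t, g t ∈ Strap ∧ (g t) 0 = 0 := by
    intro t
    have h : g t ∈ Set.range g := Set.mem_range_self t
    rw [hgim] at h; exact h
  have hft1 : Tendsto (fun t => (f t) 1) atTop (nhds 0) := by
    have h1 : Continuous fun z : EuclideanSpace ℝ (Fin 2) => z 1 := by fun_prop
    have := (h1.tendsto (pt 1 0)).comp hflim
    simpa [Function.comp_def] using this
  have hgt1 : Tendsto (fun t => (g t) 1) atTop (nhds 0) := by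
    have h1 : Continuous fun z : EuclideanSpace ℝ (Fin 2) => z 1 := by fun_prop
    have := (h1.tendsto (pt 0 0)).comp hglim
    simpa [Function.comp_def] using this
  have hev : ∀ᶠ t in atTop, ((f t) 1 < 1/2 ∧ (g t) 1 < 1/2) ∧ 0 < t :=
    ((hft1.eventually_lt_const (by norm_num)).and
      (hgt1.eventually_lt_const (by norm_num))).and (eventually_gt_atTop 0)
  obtain ⟨N, hN⟩ := eventually_atTop.mp hev
  have hfform : ∀ t, N ≤ t → f t = pt 1 (1/(1+Real.exp t)) := by
    intro t ht
    exact geodesic_formula (by norm_num) le_rfl f hfc hf0 hfdist (hN t ht).2 (hN t ht).1.1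
  have hgform : ∀ t, N ≤ t → g t = pt 0 (1/(1+Real.exp t)) := by
    intro t ht
    exact geodesic_formula le_rfl (by norm_num) g hgc hg0 hgdist (hN t ht).2 (hN t ht).1.2
  set D := fun t => hilbertDist Strap (f t) (g t) with hDdef
  have hyb : ∀ t : ℝ, 0 < 1/(1+Real.exp t) ∧ 1/(1+Real.exp t) < 1 := by
    intro t
    have he := Real.exp_pos t
    constructor
    · positivity
    · rw [div_lt_one (by positivity)]; linarith
  have hD : ∀ t, N ≤ t → D t = Real.log
      ((2+(1/(1+Real.exp t)))*(2+(1/(1+Real.exp t)))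
        /((1+(1/(1+Real.exp t)))*(1+(1/(1+Real.exp t))))) := by
    intro t ht
    show hilbertDist Strap (f t) (g t) = _
    rw [hfform t ht, hgform t ht, hilbert_horizontal (hyb t).1 (hyb t).2]
  have hDlt : ∀ t, N ≤ t → D t < Real.log 4 := by
    intro t ht
    rw [hD t ht]
    set y := 1/(1+Real.exp t) with hy
    obtain ⟨hy0, hy1⟩ := hyb t
    rw [← hy] at hy0 hy1
    apply Real.log_lt_log (by positivity)
    rw [div_lt_iff₀ (by positivity)]
    nlinarith
  have hytend : Tendsto (fun t : ℝ => 1/(1+Real.exp t)) atTop (nhds 0) := by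
    have h1 : Tendsto (fun t : ℝ => 1 + Real.exp t) atTop atTop :=
      tendsto_atTop_add_const_left _ 1 Real.tendsto_exp_atTop
    simpa [one_div, Pi.inv_def] using h1.inv_tendsto_atTop
  have hcont : ContinuousAt (fun y : ℝ => Real.log ((2+y)*(2+y)/((1+y)*(1+y)))) 0 := by
    have h2 : ContinuousAt (fun y : ℝ => (2+y)*(2+y)/((1+y)*(1+y))) 0 :=
      ContinuousAt.div (by fun_prop) (by fun_prop) (by norm_num)
    have h3 : ((2:ℝ)+0)*(2+0)/((1+0)*(1+0)) = 4 := by norm_num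
    exact (Real.continuousAt_log (by rw [h3]; norm_num)).comp h2
  have hDtend : Tendsto D atTop (nhds (Real.log 4)) := by
    have h4 := hcont.tendsto.comp hytend
    have h5 : Real.log ((2+(0:ℝ))*(2+0)/((1+0)*(1+0))) = Real.log 4 := by norm_num
    rw [h5] at h4
    apply h4.congr'
    filter_upwards [eventually_ge_atTop N] with t ht
    exact (hD t ht).symm
  set t1 := max T N with ht1def
  have ht1T : T ≤ t1 := le_max_left _ _
  have ht1N : N ≤ t1 := le_max_right _ _
  have hlt1 : D t1 < Real.log 4 := hDlt t1 ht1N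
  have hmid : (D t1 + Real.log 4)/2 < Real.log 4 := by linarith
  have hev2 : ∀ᶠ m in atTop, (D t1 + Real.log 4)/2 < D m :=
    hDtend.eventually_const_lt hmid
  obtain ⟨m, hm1, hm2⟩ := (hev2.and (eventually_ge_atTop t1)).exists
  set t2 := 2*m - t1 with ht2def
  have ht2N : N ≤ t2 := by simp only [ht2def]; linarith
  have ht2T : T ≤ t2 := by simp only [ht2def]; linarith
  have hkey := hcon.2 (show t1 ∈ Set.Ici T from ht1T) (show t2 ∈ Set.Ici T from ht2T)
    (by norm_num : (0:ℝ) ≤ 1/2) (by norm_num : (0:ℝ) ≤ 1/2) (by norm_num : (1:ℝ)/2 + 1/2 = 1)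
  have hmm : (1/2 : ℝ) • t1 + (1/2 : ℝ) • t2 = m := by
    simp only [smul_eq_mul, ht2def]; ring
  rw [hmm] at hkey
  have hD2 : D t2 < Real.log 4 := hDlt t2 ht2N
  simp only [smul_eq_mul] at hkey
  have hkey' : D m ≤ 1/2 * D t1 + 1/2 * D t2 := hkey
  linarith
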